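/- Let H be a complex inner product space and let A : Fin 5 → Fin 2 → (H →ₗ[ℂ] H) satisfy: each A i x is self-adjoint, (A i x) ∘ (A i x) = id, and A i x commutes with A j y whenever i ≠ j. Define X'₁ = (A 1 0 + A 1 1)/√2, Z'₁ = (A 1 0 − A 1 1)/√2, X'ᵢ = A i 0, Z'ᵢ = A i 1 for i = 2,…,5, S'₁ = X'₁Z'₂Z'₃X'₄, S'₂ = X'₂Z'₃Z'₄X'₅, S'₃ = X'₁X'₃Z'₄Z'₅, S'₄ = Z'₁X'₂X'₄Z'₅, and B₅ = √2·S'₁ + S'₂ + √2·S'₃ + 2√2·S'₄. Suppose φ ∈ H satisfies ⟪φ, B₅ φ⟫ = (1 + 4√2)·‖φ‖². Then: (a) S'ᵢ φ = φ for every i ∈ {1,2,3,4}; (b) (X'₁)² φ = φ and (Z'₁)² φ = φ; and (c) (X'ᵢ ∘ Z'ᵢ + Z'ᵢ ∘ X'ᵢ) φ = 0 for every site i ∈ {1,2,3,4,5}. -/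

import Mathlib

noncomputable section

open scoped InnerProductSpace

namespace BellI5

variable {H : Type*} [NormedAddCommGroup H] [InnerProductSpace ℂ H]

/-- The effective `X` observable at each site (site `0` plays the special role). -/
def Xop (A : Fin 5 → Fin 2 → Module.End ℂ H) (i : Fin 5) : Module.End ℂ H :=
  if i = 0 then (Real.sqrt 2 : ℂ)⁻¹ • (A 0 0 + A 0 1) else A i 0

/-- The effective `Z` observable at each site (site `0` plays the special role). -/
def Zop (A : Fin 5 → Fin 2 → Module.End ℂ H) (i : Fin 5) : Module.End ℂ H :=
  if i = 0 then (Real.sqrt 2 : ℂ)⁻¹ • (A 0 0 - A 0 1) else A i 1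

/-- The four operators `S'₁, S'₂, S'₃, S'₄` built from the measurement observables. -/
def S (A : Fin 5 → Fin 2 → Module.End ℂ H) : Fin 4 → Module.End ℂ H :=
  ![Xop A 0 * Zop A 1 * Zop A 2 * Xop A 3,
    Xop A 1 * Zop A 2 * Zop A 3 * Xop A 4,
    Xop A 0 * Xop A 2 * Zop A 3 * Zop A 4,
    Zop A 0 * Xop A 1 * Xop A 3 * Zop A 4]

/-- The Bell operator `B₅ = √2·S'₁ + S'₂ + √2·S'₃ + 2√2·S'₄`. -/
def Bell (A : Fin 5 → Fin 2 → Module.End ℂ H) : Module.End ℂ H :=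
  (Real.sqrt 2 : ℂ) • S A 0 + S A 1 + (Real.sqrt 2 : ℂ) • S A 2 +
    ((2 * Real.sqrt 2 : ℝ) : ℂ) • S A 3

private lemma sq_collapse {R : Type*} [Ring R] {t s : R} (h : s * t = t * s)
    (hs : s * s = 1) : (t * s) * (t * s) = t * t := by
  rw [mul_assoc, ← mul_assoc s, h, mul_assoc, hs, mul_one]

private lemma symm_mul {p q : Module.End ℂ H}
    (hp : ∀ u v : H, ⟪p u, v⟫_ℂ = ⟪u, p v⟫_ℂ)
    (hq : ∀ u v : H, ⟪q u, v⟫_ℂ = ⟪u, q v⟫_ℂ)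
    (hpq : q * p = p * q) (u v : H) : ⟪(p * q) u, v⟫_ℂ = ⟪u, (p * q) v⟫_ℂ := by
  conv_rhs => rw [← hpq]
  simp only [Module.End.mul_apply]
  rw [hp, hq]

set_option maxHeartbeats 1000000 in
/-- algebraic relations extracted from a maximal violation of `I₅`:
(a) the state is stabilized by `S'₁,…,S'₄`; (b) `X'₁` and `Z'₁` square to the identity
on the state; (c) at every site the effective observables anticommute on the state. -/
theorem relations_from_maximal_violation (A : Fin 5 → Fin 2 → Module.End ℂ H)
    (hsa : ∀ i x (u v : H), ⟪A i x u, v⟫_ℂ = ⟪u, A i x v⟫_ℂ)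
    (hsq : ∀ i x, A i x * A i x = 1)
    (hcomm : ∀ i j x y, i ≠ j → A i x * A j y = A j y * A i x)
    (φ : H) (hφ : ⟪φ, Bell A φ⟫_ℂ = (((1 + 4 * Real.sqrt 2) * ‖φ‖ ^ 2 : ℝ) : ℂ)) :
    (∀ i : Fin 4, S A i φ = φ) ∧
    ((Xop A 0 * Xop A 0) φ = φ ∧ (Zop A 0 * Zop A 0) φ = φ) ∧
    (∀ i : Fin 5, (Xop A i * Zop A i + Zop A i * Xop A i) φ = 0) := by
  have hcm : ∀ i j x y, i ≠ j → Commute (A i x) (A j y) := fun i j x y h => hcomm i j x y h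
  have cmX : ∀ j y, j ≠ 0 → Commute (Xop A 0) (A j y) := by
    intro j y h
    have h0 : (0 : Fin 5) ≠ j := fun e => h e.symm
    show Commute (if (0:Fin 5) = 0 then (Real.sqrt 2 : ℂ)⁻¹ • (A 0 0 + A 0 1) else A 0 0)
      (A j y)
    rw [if_pos rfl]
    exact ((hcm 0 j 0 y h0).add_left (hcm 0 j 1 y h0)).smul_left _
  have cmZ : ∀ j y, j ≠ 0 → Commute (Zop A 0) (A j y) := by
    intro j y h
    have h0 : (0 : Fin 5) ≠ j := fun e => h e.symm
    show Commute (if (0:Fin 5) = 0 then (Real.sqrt 2 : ℂ)⁻¹ • (A 0 0 - A 0 1) else A 0 1)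
      (A j y)
    rw [if_pos rfl]
    exact ((hcm 0 j 0 y h0).sub_left (hcm 0 j 1 y h0)).smul_left _
  have sdef0 : S A 0 = Xop A 0 * A 1 1 * A 2 1 * A 3 0 := by simp [S, Zop, Xop]
  have sdef1 : S A 1 = A 1 0 * A 2 1 * A 3 1 * A 4 0 := by simp [S, Zop, Xop]
  have sdef2 : S A 2 = Xop A 0 * A 2 0 * A 3 1 * A 4 1 := by simp [S, Zop, Xop]
  have sdef3 : S A 3 = Zop A 0 * A 1 0 * A 3 0 * A 4 1 := by simp [S, Zop, Xop]
  have hcc : ((Real.sqrt 2 : ℂ)⁻¹) * ((Real.sqrt 2 : ℂ)⁻¹) = (2:ℂ)⁻¹ := by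
    rw [← mul_inv]
    norm_cast
    rw [Real.mul_self_sqrt (by norm_num)]
    norm_num
  have hxz0 : Xop A 0 = (Real.sqrt 2 : ℂ)⁻¹ • (A 0 0 + A 0 1) := if_pos rfl
  have hzz0 : Zop A 0 = (Real.sqrt 2 : ℂ)⁻¹ • (A 0 0 - A 0 1) := if_pos rfl
  have hanti0 : Xop A 0 * Zop A 0 + Zop A 0 * Xop A 0 = 0 := by
    rw [hxz0, hzz0, smul_mul_smul_comm, smul_mul_smul_comm, ← smul_add]
    have e : (A 0 0 + A 0 1) * (A 0 0 - A 0 1) + (A 0 0 - A 0 1) * (A 0 0 + A 0 1)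
        = A 0 0 * A 0 0 + A 0 0 * A 0 0 - (A 0 1 * A 0 1 + A 0 1 * A 0 1) := by noncomm_ring
    rw [e, hsq 0 0, hsq 0 1]
    simp
  have hsum0 : Xop A 0 * Xop A 0 + Zop A 0 * Zop A 0 = (2:ℂ) • 1 := by
    rw [hxz0, hzz0, smul_mul_smul_comm, smul_mul_smul_comm, ← smul_add, hcc]
    have e : (A 0 0 + A 0 1) * (A 0 0 + A 0 1) + (A 0 0 - A 0 1) * (A 0 0 - A 0 1)
        = A 0 0 * A 0 0 + A 0 0 * A 0 0 + (A 0 1 * A 0 1 + A 0 1 * A 0 1) := by noncomm_ring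
    rw [e, hsq 0 0, hsq 0 1,
      show ((1:Module.End ℂ H) + 1 + (1 + 1)) = (4:ℂ) • 1 by module, smul_smul,
      show ((2:ℂ)⁻¹ * 4) = (2:ℂ) by norm_num]
  have hS0sq : S A 0 * S A 0 = Xop A 0 * Xop A 0 := by
    rw [sdef0,
      sq_collapse ((((cmX 3 0 (by decide)).symm.mul_right
        (hcm 3 1 0 1 (by decide))).mul_right (hcm 3 2 0 1 (by decide))).eq) (hsq 3 0),
      sq_collapse (((cmX 2 1 (by decide)).symm.mul_right (hcm 2 1 1 1 (by decide))).eq)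
        (hsq 2 1),
      sq_collapse ((cmX 1 1 (by decide)).symm.eq) (hsq 1 1)]
  have hS1sq : S A 1 * S A 1 = 1 := by
    rw [sdef1,
      sq_collapse ((((hcm 4 1 0 0 (by decide)).mul_right
        (hcm 4 2 0 1 (by decide))).mul_right (hcm 4 3 0 1 (by decide))).eq) (hsq 4 0)]
    rw [sq_collapse (((hcm 3 1 1 0 (by decide)).mul_right (hcm 3 2 1 1 (by decide))).eq)
        (hsq 3 1),
      sq_collapse ((hcm 2 1 1 0 (by decide)).eq) (hsq 2 1), hsq 1 0]
  have hS2sq : S A 2 * S A 2 = Xop A 0 * Xop A 0 := by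
    rw [sdef2,
      sq_collapse ((((cmX 4 1 (by decide)).symm.mul_right
        (hcm 4 2 1 0 (by decide))).mul_right (hcm 4 3 1 1 (by decide))).eq) (hsq 4 1),
      sq_collapse (((cmX 3 1 (by decide)).symm.mul_right (hcm 3 2 1 0 (by decide))).eq)
        (hsq 3 1),
      sq_collapse ((cmX 2 0 (by decide)).symm.eq) (hsq 2 0)]
  have hS3sq : S A 3 * S A 3 = Zop A 0 * Zop A 0 := by
    rw [sdef3,
      sq_collapse ((((cmZ 4 1 (by decide)).symm.mul_right
        (hcm 4 1 1 0 (by decide))).mul_right (hcm 4 3 1 0 (by decide))).eq) (hsq 4 1),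
      sq_collapse (((cmZ 3 0 (by decide)).symm.mul_right (hcm 3 1 0 0 (by decide))).eq)
        (hsq 3 0),
      sq_collapse ((cmZ 1 0 (by decide)).symm.eq) (hsq 1 0)]
  have key : (Real.sqrt 2 : ℂ) • ((1 - S A 0) * (1 - S A 0)) + (1 - S A 1) * (1 - S A 1)
      + (Real.sqrt 2 : ℂ) • ((1 - S A 2) * (1 - S A 2))
      + ((2 * Real.sqrt 2 : ℝ) : ℂ) • ((1 - S A 3) * (1 - S A 3))
      = (((2 + 8 * Real.sqrt 2 : ℝ)) : ℂ) • (1 : Module.End ℂ H) - (2:ℂ) • Bell A := by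
    have q0 : (1 - S A 0) * (1 - S A 0) = 1 - S A 0 - S A 0 + Xop A 0 * Xop A 0 := by
      have h : (1 - S A 0) * (1 - S A 0) = 1 - S A 0 - S A 0 + S A 0 * S A 0 := by noncomm_ring
      rw [h, hS0sq]
    have q1 : (1 - S A 1) * (1 - S A 1) = 1 - S A 1 - S A 1 + 1 := by
      have h : (1 - S A 1) * (1 - S A 1) = 1 - S A 1 - S A 1 + S A 1 * S A 1 := by noncomm_ring
      rw [h, hS1sq]
    have q2 : (1 - S A 2) * (1 - S A 2) = 1 - S A 2 - S A 2 + Xop A 0 * Xop A 0 := by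
      have h : (1 - S A 2) * (1 - S A 2) = 1 - S A 2 - S A 2 + S A 2 * S A 2 := by noncomm_ring
      rw [h, hS2sq]
    have q3 : (1 - S A 3) * (1 - S A 3) = 1 - S A 3 - S A 3 + Zop A 0 * Zop A 0 := by
      have h : (1 - S A 3) * (1 - S A 3) = 1 - S A 3 - S A 3 + S A 3 * S A 3 := by noncomm_ring
      rw [h, hS3sq]
    have hXX : Xop A 0 * Xop A 0 = (2:ℂ) • 1 - Zop A 0 * Zop A 0 := by
      rw [← hsum0]; abel
    rw [q0, q1, q2, q3, hXX, Bell]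
    push_cast
    module
  have hsX0 : ∀ u v : H, ⟪Xop A 0 u, v⟫_ℂ = ⟪u, Xop A 0 v⟫_ℂ := by
    intro u v
    rw [hxz0]
    simp [inner_smul_left, inner_smul_right, inner_add_left, inner_add_right, hsa,
      map_inv₀, Complex.conj_ofReal]
    ring
  have hsZ0 : ∀ u v : H, ⟪Zop A 0 u, v⟫_ℂ = ⟪u, Zop A 0 v⟫_ℂ := by
    intro u v
    rw [hzz0]
    simp [inner_smul_left, inner_smul_right, inner_sub_left, inner_sub_right, hsa,
      map_inv₀, Complex.conj_ofReal]
    ring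
  have sy0 : ∀ u v : H, ⟪S A 0 u, v⟫_ℂ = ⟪u, S A 0 v⟫_ℂ := by
    intro u v
    rw [sdef0]
    exact symm_mul (symm_mul (symm_mul hsX0 (hsa 1 1) (cmX 1 1 (by decide)).symm.eq)
      (hsa 2 1) (((cmX 2 1 (by decide)).symm.mul_right (hcm 2 1 1 1 (by decide))).eq))
      (hsa 3 0) ((((cmX 3 0 (by decide)).symm.mul_right (hcm 3 1 0 1 (by decide))).mul_right
        (hcm 3 2 0 1 (by decide))).eq) u v
  have sy1 : ∀ u v : H, ⟪S A 1 u, v⟫_ℂ = ⟪u, S A 1 v⟫_ℂ := by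
    intro u v
    rw [sdef1]
    exact symm_mul (symm_mul (symm_mul (hsa 1 0) (hsa 2 1) (hcm 2 1 1 0 (by decide)).eq)
      (hsa 3 1) (((hcm 3 1 1 0 (by decide)).mul_right (hcm 3 2 1 1 (by decide))).eq))
      (hsa 4 0) ((((hcm 4 1 0 0 (by decide)).mul_right (hcm 4 2 0 1 (by decide))).mul_right
        (hcm 4 3 0 1 (by decide))).eq) u v
  have sy2 : ∀ u v : H, ⟪S A 2 u, v⟫_ℂ = ⟪u, S A 2 v⟫_ℂ := by
    intro u v
    rw [sdef2]
    exact symm_mul (symm_mul (symm_mul hsX0 (hsa 2 0) (cmX 2 0 (by decide)).symm.eq)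
      (hsa 3 1) (((cmX 3 1 (by decide)).symm.mul_right (hcm 3 2 1 0 (by decide))).eq))
      (hsa 4 1) ((((cmX 4 1 (by decide)).symm.mul_right (hcm 4 2 1 0 (by decide))).mul_right
        (hcm 4 3 1 1 (by decide))).eq) u v
  have sy3 : ∀ u v : H, ⟪S A 3 u, v⟫_ℂ = ⟪u, S A 3 v⟫_ℂ := by
    intro u v
    rw [sdef3]
    exact symm_mul (symm_mul (symm_mul hsZ0 (hsa 1 0) (cmZ 1 0 (by decide)).symm.eq)
      (hsa 3 0) (((cmZ 3 0 (by decide)).symm.mul_right (hcm 3 1 0 0 (by decide))).eq))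
      (hsa 4 1) ((((cmZ 4 1 (by decide)).symm.mul_right (hcm 4 1 1 0 (by decide))).mul_right
        (hcm 4 3 1 0 (by decide))).eq) u v
  have symS : ∀ i : Fin 4, ∀ u v : H, ⟪S A i u, v⟫_ℂ = ⟪u, S A i v⟫_ℂ := by
    intro i
    fin_cases i
    exacts [sy0, sy1, sy2, sy3]
  have symE : ∀ i : Fin 4, ∀ u v : H, ⟪(1 - S A i) u, v⟫_ℂ = ⟪u, (1 - S A i) v⟫_ℂ := by
    intro i u v
    simp only [LinearMap.sub_apply, Module.End.one_apply, inner_sub_left, inner_sub_right,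
      symS i u v]
  have hnorm : ∀ i : Fin 4, ⟪φ, ((1 - S A i) * (1 - S A i)) φ⟫_ℂ
      = ((‖(1 - S A i) φ‖ ^ 2 : ℝ) : ℂ) := by
    intro i
    rw [Module.End.mul_apply, ← symE i φ ((1 - S A i) φ), inner_self_eq_norm_sq_to_K]
    norm_cast
  have hmain := congrArg (fun T : Module.End ℂ H => ⟪φ, T φ⟫_ℂ) key
  simp only [LinearMap.add_apply, LinearMap.smul_apply, LinearMap.sub_apply,
    Module.End.one_apply, inner_add_right, inner_smul_right, inner_sub_right] at hmain
  have hself : ⟪φ, φ⟫_ℂ = ((‖φ‖ ^ 2 : ℝ) : ℂ) := by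
    exact_mod_cast inner_self_eq_norm_sq_to_K (𝕜 := ℂ) φ
  rw [hnorm 0, hnorm 1, hnorm 2, hnorm 3, hφ, hself] at hmain
  have hreal : Real.sqrt 2 * ‖(1 - S A 0) φ‖^2 + ‖(1 - S A 1) φ‖^2
      + Real.sqrt 2 * ‖(1 - S A 2) φ‖^2 + 2 * Real.sqrt 2 * ‖(1 - S A 3) φ‖^2 = 0 := by
    have h' : ((Real.sqrt 2 * ‖(1 - S A 0) φ‖^2 + ‖(1 - S A 1) φ‖^2
        + Real.sqrt 2 * ‖(1 - S A 2) φ‖^2 + 2 * Real.sqrt 2 * ‖(1 - S A 3) φ‖^2 : ℝ) : ℂ)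
        = ((0:ℝ) : ℂ) := by
      push_cast
      push_cast at hmain
      linear_combination hmain
    exact_mod_cast h'
  have hs2 : (0:ℝ) < Real.sqrt 2 := Real.sqrt_pos.mpr (by norm_num)
  have n0 := sq_nonneg ‖(1 - S A 0) φ‖
  have n1 := sq_nonneg ‖(1 - S A 1) φ‖
  have n2 := sq_nonneg ‖(1 - S A 2) φ‖
  have n3 := sq_nonneg ‖(1 - S A 3) φ‖
  have stab : ∀ i : Fin 4, S A i φ = φ := by
    have pgen : ∀ i : Fin 4, ‖(1 - S A i) φ‖ ^ 2 = 0 → S A i φ = φ := by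
      intro i hz
      have := norm_eq_zero.mp (pow_eq_zero_iff two_ne_zero |>.mp hz)
      rw [LinearMap.sub_apply, Module.End.one_apply, sub_eq_zero] at this
      exact this.symm
    intro i
    fin_cases i
    · exact pgen 0 (le_antisymm (by nlinarith) n0)
    · exact pgen 1 (le_antisymm (by nlinarith) n1)
    · exact pgen 2 (le_antisymm (by nlinarith) n2)
    · exact pgen 3 (le_antisymm (by nlinarith) n3)
  refine ⟨stab, ⟨?_, ?_⟩, ?_⟩
  · rw [← hS0sq, Module.End.mul_apply, stab 0, stab 0]
  · rw [← hS3sq, Module.End.mul_apply, stab 3, stab 3]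
  -- part (c): vector-level tools
  have sw : ∀ (i j : Fin 5), i ≠ j → ∀ (x y : Fin 2) (v : H),
      A i x (A j y v) = A j y (A i x v) := by
    intro i j h x y v
    rw [← Module.End.mul_apply, hcomm i j x y h, Module.End.mul_apply]
  have swX : ∀ (j : Fin 5), j ≠ 0 → ∀ (y : Fin 2) (v : H),
      Xop A 0 (A j y v) = A j y (Xop A 0 v) := by
    intro j h y v
    rw [← Module.End.mul_apply, (cmX j y h).eq, Module.End.mul_apply]
  have swZ : ∀ (j : Fin 5), j ≠ 0 → ∀ (y : Fin 2) (v : H),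
      Zop A 0 (A j y v) = A j y (Zop A 0 v) := by
    intro j h y v
    rw [← Module.End.mul_apply, (cmZ j y h).eq, Module.End.mul_apply]
  have sq' : ∀ (i : Fin 5) (x : Fin 2) (v : H), A i x (A i x v) = v := by
    intro i x v
    rw [← Module.End.mul_apply, hsq i x, Module.End.one_apply]
  have anti0v : ∀ w : H, Xop A 0 (Zop A 0 w) + Zop A 0 (Xop A 0 w) = 0 := by
    intro w
    have := congrArg (fun T : Module.End ℂ H => T w) hanti0
    simpa using this
  -- stabilizer conditions in applied form
  have v0 : Xop A 0 (A 1 1 (A 2 1 (A 3 0 φ))) = φ := by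
    have := stab 0; rw [sdef0] at this
    simpa only [Module.End.mul_apply] using this
  have v1 : A 1 0 (A 2 1 (A 3 1 (A 4 0 φ))) = φ := by
    have := stab 1; rw [sdef1] at this
    simpa only [Module.End.mul_apply] using this
  have v2 : Xop A 0 (A 2 0 (A 3 1 (A 4 1 φ))) = φ := by
    have := stab 2; rw [sdef2] at this
    simpa only [Module.End.mul_apply] using this
  have v3 : Zop A 0 (A 1 0 (A 3 0 (A 4 1 φ))) = φ := by
    have := stab 3; rw [sdef3] at this
    simpa only [Module.End.mul_apply] using this
  -- extraction of single letters acting on φ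
  have hz1 : A 1 1 φ = Xop A 0 (A 2 1 (A 3 0 φ)) := by
    conv_lhs => rw [← v0]
    rw [← swX 1 (by decide) 1, sq' 1 1]
  have hx1b : A 1 0 φ = Zop A 0 (A 3 0 (A 4 1 φ)) := by
    conv_lhs => rw [← v3]
    rw [← swZ 1 (by decide) 0, sq' 1 0]
  have hx2 : A 2 0 φ = Xop A 0 (A 3 1 (A 4 1 φ)) := by
    conv_lhs => rw [← v2]
    rw [← swX 2 (by decide) 0, sq' 2 0]
  have hz2a : A 2 1 φ = A 1 0 (A 3 1 (A 4 0 φ)) := by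
    conv_lhs => rw [← v1]
    rw [sw 2 1 (by decide) 1 0, sq' 2 1]
  have hz3b : A 3 1 φ = Xop A 0 (A 2 0 (A 4 1 φ)) := by
    conv_lhs => rw [← v2]
    rw [← swX 3 (by decide) 1, sw 3 2 (by decide) 1 0, sq' 3 1]
  have hx3b : A 3 0 φ = Zop A 0 (A 1 0 (A 4 1 φ)) := by
    conv_lhs => rw [← v3]
    rw [← swZ 3 (by decide) 0, sw 3 1 (by decide) 0 0, sq' 3 0]
  have hz4b : A 4 1 φ = Zop A 0 (A 1 0 (A 3 0 φ)) := by
    conv_lhs => rw [← v3]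
    rw [← swZ 4 (by decide) 1, sw 4 1 (by decide) 1 0, sw 4 3 (by decide) 1 0, sq' 4 1]
  have hx4 : A 4 0 φ = A 1 0 (A 2 1 (A 3 1 φ)) := by
    conv_lhs => rw [← v1]
    rw [sw 4 1 (by decide) 0 0, sw 4 2 (by decide) 0 1, sw 4 3 (by decide) 0 1, sq' 4 0]
  -- site 3 anticommutation
  have t31 : A 3 0 (A 3 1 φ) = Xop A 0 (Zop A 0 (A 1 0 (A 2 0 φ))) := by
    rw [hz3b, ← swX 3 (by decide) 0, sw 3 2 (by decide) 0 0, sw 3 4 (by decide) 0 1, hx3b,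
      ← swZ 4 (by decide) 1, sw 4 1 (by decide) 1 0, sq' 4 1,
      ← swZ 2 (by decide) 0, sw 2 1 (by decide) 0 0]
  have t32 : A 3 1 (A 3 0 φ) = Zop A 0 (Xop A 0 (A 1 0 (A 2 0 φ))) := by
    rw [hx3b, ← swZ 3 (by decide) 1, sw 3 1 (by decide) 1 0, sw 3 4 (by decide) 1 1, hz3b,
      ← swX 4 (by decide) 1, sw 4 2 (by decide) 1 0, sq' 4 1, ← swX 1 (by decide) 0]
  have site3 : A 3 0 (A 3 1 φ) + A 3 1 (A 3 0 φ) = 0 := by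
    rw [t31, t32]; exact anti0v _
  -- site 1 anticommutation
  have t11 : A 1 0 (A 1 1 φ) = Xop A 0 (Zop A 0 (A 2 1 (A 4 1 φ))) := by
    rw [hz1, ← swX 1 (by decide) 0, sw 1 2 (by decide) 0 1, sw 1 3 (by decide) 0 0, hx1b,
      ← swZ 3 (by decide) 0, sq' 3 0, ← swZ 2 (by decide) 1]
  have t12 : A 1 1 (A 1 0 φ) = Zop A 0 (Xop A 0 (A 2 1 (A 4 1 φ))) := by
    rw [hx1b, ← swZ 1 (by decide) 1, sw 1 3 (by decide) 1 0, sw 1 4 (by decide) 1 1, hz1,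
      ← swX 4 (by decide) 1, ← swX 3 (by decide) 0, sw 4 2 (by decide) 1 1,
      sw 3 2 (by decide) 0 1, sw 4 3 (by decide) 1 0, sq' 3 0]
  have site1 : A 1 0 (A 1 1 φ) + A 1 1 (A 1 0 φ) = 0 := by
    rw [t11, t12]; exact anti0v _
  -- site 4 anticommutation
  have t41 : A 4 0 (A 4 1 φ) = Zop A 0 (A 2 1 (A 3 0 (A 3 1 φ))) := by
    rw [hz4b, ← swZ 4 (by decide) 0, sw 4 1 (by decide) 0 0, sw 4 3 (by decide) 0 0, hx4,
      sw 3 1 (by decide) 0 0, sq' 1 0, sw 3 2 (by decide) 0 1]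
  have t42 : A 4 1 (A 4 0 φ) = Zop A 0 (A 2 1 (A 3 1 (A 3 0 φ))) := by
    rw [hx4, sw 4 1 (by decide) 1 0, sw 4 2 (by decide) 1 1, sw 4 3 (by decide) 1 1, hz4b,
      ← swZ 3 (by decide) 1, ← swZ 2 (by decide) 1, ← swZ 1 (by decide) 0,
      sw 3 1 (by decide) 1 0, sw 2 1 (by decide) 1 0, sq' 1 0]
  have site4 : A 4 0 (A 4 1 φ) + A 4 1 (A 4 0 φ) = 0 := by
    rw [t41, t42, ← map_add, ← map_add, site3, map_zero, map_zero]
  -- site 2 anticommutation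
  have t21 : A 2 0 (A 2 1 φ) = Xop A 0 (A 1 0 (A 4 0 (A 4 1 φ))) := by
    rw [hz2a, sw 2 1 (by decide) 0 0, sw 2 3 (by decide) 0 1, sw 2 4 (by decide) 0 0, hx2,
      ← swX 4 (by decide) 0, ← swX 3 (by decide) 1, ← swX 1 (by decide) 0,
      sw 4 3 (by decide) 0 1, sq' 3 1]
  have t22 : A 2 1 (A 2 0 φ) = Xop A 0 (A 1 0 (A 4 1 (A 4 0 φ))) := by
    rw [hx2, ← swX 2 (by decide) 1, sw 2 3 (by decide) 1 1, sw 2 4 (by decide) 1 1, hz2a,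
      sw 4 1 (by decide) 1 0, sw 3 1 (by decide) 1 0, sw 4 3 (by decide) 1 1, sq' 3 1]
  have site2 : A 2 0 (A 2 1 φ) + A 2 1 (A 2 0 φ) = 0 := by
    rw [t21, t22, ← map_add, ← map_add, site4, map_zero, map_zero]
  -- assemble part (c)
  intro i
  fin_cases i
  · show (Xop A 0 * Zop A 0 + Zop A 0 * Xop A 0) φ = 0
    rw [hanti0]; rfl
  · show (Xop A 1 * Zop A 1 + Zop A 1 * Xop A 1) φ = 0
    rw [show Xop A 1 = A 1 0 from if_neg (by decide),
      show Zop A 1 = A 1 1 from if_neg (by decide), LinearMap.add_apply,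
      Module.End.mul_apply, Module.End.mul_apply]
    exact site1
  · show (Xop A 2 * Zop A 2 + Zop A 2 * Xop A 2) φ = 0
    rw [show Xop A 2 = A 2 0 from if_neg (by decide),
      show Zop A 2 = A 2 1 from if_neg (by decide), LinearMap.add_apply,
      Module.End.mul_apply, Module.End.mul_apply]
    exact site2
  · show (Xop A 3 * Zop A 3 + Zop A 3 * Xop A 3) φ = 0
    rw [show Xop A 3 = A 3 0 from if_neg (by decide),
      show Zop A 3 = A 3 1 from if_neg (by decide), LinearMap.add_apply,
      Module.End.mul_apply, Module.End.mul_apply]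
    exact site3
  · show (Xop A 4 * Zop A 4 + Zop A 4 * Xop A 4) φ = 0
    rw [show Xop A 4 = A 4 0 from if_neg (by decide),
      show Zop A 4 = A 4 1 from if_neg (by decide), LinearMap.add_apply,
      Module.End.mul_apply, Module.End.mul_apply]
    exact site4

end BellI5
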